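/- Let K be an algebraically closed field of characteristic 2, and let x, y ∈ K with y ≠ x³. Then the polynomial a²b + ab² + x·a² + x·b² + x²·a + x²·b + x³ + y, regarded as an element of the polynomial ring K[a, b], is irreducible. -/

import Mathlib

open MvPolynomial

lemma prime_X0 (K : Type*) [Field K] : Prime (X 0 : MvPolynomial (Fin 1) K) := by
  rw [← MulEquiv.prime_iff (finSuccEquiv K 0)]
  simpa [finSuccEquiv_X_zero] using Polynomial.prime_X (R := MvPolynomial (Fin 0) K)

lemma no_root (K : Type*) [Field K] (c : K) (hc : c ≠ 0)
    {F : Type*} [Field F] [Algebra (MvPolynomial (Fin 1) K) F]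
    [IsFractionRing (MvPolynomial (Fin 1) K) F] (r : F) :
    algebraMap (MvPolynomial (Fin 1) K) F (X 0) * r ^ 2
      + algebraMap (MvPolynomial (Fin 1) K) F (X 0) ^ 2 * r
      + algebraMap (MvPolynomial (Fin 1) K) F (C c) ≠ 0 := by
  set R := MvPolynomial (Fin 1) K
  intro hroot
  set b : R := X 0 with hb
  set ι := algebraMap R F with hι
  have hint : IsIntegral R (ι b * r) := by
    refine ⟨Polynomial.X ^ 2 + (Polynomial.C (b ^ 2) * Polynomial.X + Polynomial.C (b * C c)),
      ?_, ?_⟩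
    · apply Polynomial.Monic.add_of_left (Polynomial.monic_X_pow 2)
      apply lt_of_le_of_lt (Polynomial.degree_linear_le)
      rw [Polynomial.degree_X_pow]
      exact_mod_cast one_lt_two
    · simp only [Polynomial.eval₂_add, Polynomial.eval₂_mul, Polynomial.eval₂_pow,
        Polynomial.eval₂_X, Polynomial.eval₂_C]
      simp only [map_mul, map_pow]
      linear_combination (ι b) * hroot
  haveI : IsIntegrallyClosed R := by
    set_option synthInstance.maxHeartbeats 1000000 in infer_instance
  obtain ⟨f, hf⟩ := IsIntegrallyClosed.isIntegral_iff.mp hint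
  have heq : f ^ 2 + b ^ 2 * f + b * C c = 0 := by
    apply IsFractionRing.injective R F
    rw [map_zero, map_add, map_add, map_mul, map_mul, map_pow, map_pow, hf]
    have h2 : (ι b * r) ^ 2 + ι b ^ 2 * (ι b * r) + ι b * ι (C c)
        = ι b * (ι b * r ^ 2 + ι b ^ 2 * r + ι (C c)) := by ring
    rw [h2, hroot, mul_zero]
  have hdvd : b ∣ f ^ 2 := ⟨-(b * f + C c), by linear_combination heq⟩
  obtain ⟨h, rfl⟩ := (prime_X0 K).dvd_of_dvd_pow hdvd
  have heq2 : b * h ^ 2 + b ^ 2 * h + C c = 0 := by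
    have hb0 : b ≠ 0 := (prime_X0 K).ne_zero
    have : b * (b * h ^ 2 + b ^ 2 * h + C c) = 0 := by linear_combination heq
    exact (mul_eq_zero.mp this).resolve_left hb0
  have hdvd2 : b ∣ C c := ⟨-(h ^ 2 + b * h), by linear_combination heq2⟩
  exact (prime_X0 K).not_unit
    (isUnit_of_dvd_unit hdvd2 ((isUnit_iff_ne_zero.mpr hc).map (C : K →+* R)))

lemma aux_irred (K : Type*) [Field K] (c : K) (hc : c ≠ 0) :
    Irreducible ((X 0) ^ 2 * X 1 + X 0 * (X 1) ^ 2 + C c : MvPolynomial (Fin 2) K) := by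
  rw [← MulEquiv.irreducible_iff (finSuccEquiv K 1)]
  have h1 : (X 1 : MvPolynomial (Fin 2) K) = X (Fin.succ 0) := rfl
  have hC : finSuccEquiv K 1 (C c) = Polynomial.C (C c) := by
    simp [finSuccEquiv_apply]
  have himg : finSuccEquiv K 1 ((X 0) ^ 2 * X 1 + X 0 * (X 1) ^ 2 + C c)
      = Polynomial.C (X 0) * Polynomial.X ^ 2
        + Polynomial.C ((X 0 : MvPolynomial (Fin 1) K) ^ 2) * Polynomial.X
        + Polynomial.C (C c) := by
    simp only [map_add, map_mul, map_pow, finSuccEquiv_X_zero, h1, finSuccEquiv_X_succ, hC]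
    rw [show ((Polynomial.C (X 0 : MvPolynomial (Fin 1) K)) ^ 2
      = Polynomial.C ((X 0 : MvPolynomial (Fin 1) K) ^ 2)) from (map_pow _ _ _).symm]
    ring
  rw [himg]
  set R := MvPolynomial (Fin 1) K with hR
  letI : NormalizationMonoid R :=
    (UniqueFactorizationMonoid.normalizationMonoid : StrongNormalizationMonoid R).toNormalizationMonoid
  letI : NormalizedGCDMonoid R := UniqueFactorizationMonoid.toNormalizedGCDMonoid R
  have hprim : (Polynomial.C (X 0 : R) * Polynomial.X ^ 2
      + Polynomial.C ((X 0 : R) ^ 2) * Polynomial.X + Polynomial.C (C c)).IsPrimitive := by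
    intro r hr
    have h0 : r ∣ C c := by
      have := (Polynomial.C_dvd_iff_dvd_coeff r _).mp hr 0
      simpa using this
    exact isUnit_of_dvd_unit h0 ((isUnit_iff_ne_zero.mpr hc).map (C : K →+* R))
  rw [hprim.irreducible_iff_irreducible_map_fraction_map (K := FractionRing R)]
  set F := FractionRing R with hF
  set ι := algebraMap R F with hι
  have hb0 : ι (X 0) ≠ 0 :=
    (map_ne_zero_iff ι (IsFractionRing.injective R F)).mpr (prime_X0 K).ne_zero
  rw [Polynomial.map_add, Polynomial.map_add, Polynomial.map_mul, Polynomial.map_mul,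
    Polynomial.map_pow, Polynomial.map_C, Polynomial.map_C, Polynomial.map_C, Polynomial.map_X]
  have hdeg : (Polynomial.C (ι (X 0)) * Polynomial.X ^ 2
      + Polynomial.C (ι ((X 0 : R) ^ 2)) * Polynomial.X
      + Polynomial.C (ι (C c))).natDegree = 2 := Polynomial.natDegree_quadratic hb0
  rw [Polynomial.irreducible_iff_roots_eq_zero_of_degree_le_three (by rw [hdeg])
    (by rw [hdeg]; norm_num)]
  by_contra hne
  obtain ⟨r, hr⟩ := Multiset.exists_mem_of_ne_zero hne
  have hroot := (Polynomial.mem_roots'.mp hr).2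
  simp only [Polynomial.IsRoot, Polynomial.eval_add, Polynomial.eval_mul, Polynomial.eval_pow,
    Polynomial.eval_C, Polynomial.eval_X] at hroot
  refine no_root K c hc r ?_
  rw [map_pow] at hroot
  exact hroot

/-- Over an algebraically closed field `K` of characteristic 2, for `x y : K`
with `y ≠ x³`, the polynomial `a²b + ab² + x·a² + x·b² + x²·a + x²·b + x³ + y` in `K[a, b]`
is irreducible.  Here `a = X 0` and `b = X 1` in `MvPolynomial (Fin 2) K`. -/
theorem cubic_irreducible (K : Type*) [Field K] [IsAlgClosed K] [CharP K 2]
    (x y : K) (hxy : y ≠ x ^ 3) :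
    Irreducible ((X 0) ^ 2 * X 1 + X 0 * (X 1) ^ 2 + C x * (X 0) ^ 2 + C x * (X 1) ^ 2
      + C (x ^ 2) * X 0 + C (x ^ 2) * X 1 + C (x ^ 3) + C y : MvPolynomial (Fin 2) K) := by
  have h2 : (2 : MvPolynomial (Fin 2) K) = 0 := by
    have := CharP.cast_eq_zero (MvPolynomial (Fin 2) K) 2
    exact_mod_cast this
  set c := y - x ^ 3 with hcdef
  have hc : c ≠ 0 := sub_ne_zero.mpr hxy
  let Teq : MvPolynomial (Fin 2) K ≃ₐ[K] MvPolynomial (Fin 2) K :=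
    AlgEquiv.ofAlgHom (aeval fun i => X i + C x) (aeval fun i => X i - C x)
      (by ext i : 1; simp [algebraMap_eq])
      (by ext i : 1; simp [algebraMap_eq])
  have key : Teq ((X 0) ^ 2 * X 1 + X 0 * (X 1) ^ 2 + C c)
      = (X 0) ^ 2 * X 1 + X 0 * (X 1) ^ 2 + C x * (X 0) ^ 2 + C x * (X 1) ^ 2
        + C (x ^ 2) * X 0 + C (x ^ 2) * X 1 + C (x ^ 3) + C y := by
    show (aeval fun i => X i + C x : MvPolynomial (Fin 2) K →ₐ[K] MvPolynomial (Fin 2) K) _ = _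
    simp only [map_add, map_mul, map_pow, aeval_X, aeval_C, algebraMap_eq, hcdef, map_sub]
    linear_combination (X 0 * C x ^ 2 + X 1 * C x ^ 2 + 2 * X 0 * X 1 * C x) * h2
  rw [← key]
  exact Irreducible.map Teq (aux_irred K c hc)
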